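/- Let g ≥ 1, G = ℤ/gℤ, and X ⊆ G with 0 ∈ X. Let a, b be positive integers with gcd(a,b) = 1. Suppose X is not periodic (the only h ∈ G with X + h = X is h = 0) and aX + bX = aX. Then X ⊆ (g/gcd(g,b))·G. -/

import Mathlib

theorem subset_of_multiples (g : ℕ) (hg : 0 < g) (X : Set (ZMod g)) (h0 : (0 : ZMod g) ∈ X)
    (a b : ℕ) (ha : 0 < a) (hb : 0 < b) (hab : Nat.Coprime a b)
    (hnp : ∀ h : ZMod g, (fun x => x + h) '' X = X → h = 0)
    (heq : {z : ZMod g | ∃ x ∈ X, ∃ y ∈ X, z = (a : ZMod g) * x + (b : ZMod g) * y} =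
      {z : ZMod g | ∃ x ∈ X, z = (a : ZMod g) * x}) :
    X ⊆ {z : ZMod g | ∃ w : ZMod g, z = ((g / Nat.gcd g b : ℕ) : ZMod g) * w} := by
  haveI : NeZero g := ⟨hg.ne'⟩
  have key : ∀ x ∈ X, ∀ y ∈ X, ∃ z ∈ X,
      (a : ZMod g) * x + (b : ZMod g) * y = (a : ZMod g) * z := by
    intro x hx y hy
    have hmem : (a : ZMod g) * x + (b : ZMod g) * y ∈
        {z : ZMod g | ∃ x ∈ X, ∃ y ∈ X, z = (a : ZMod g) * x + (b : ZMod g) * y} :=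
      ⟨x, hx, y, hy, rfl⟩
    rw [heq] at hmem
    exact hmem
  have hXfin : X.Finite := Set.toFinite X
  have hordpos : ∀ x : ZMod g, 0 < addOrderOf x := fun x => addOrderOf_pos x
  -- Claim A : no prime dividing a divides the order of an element of X
  have claimA : ∀ p : ℕ, p.Prime → p ∣ a → ∀ x ∈ X, ¬ p ∣ addOrderOf x := by
    intro p hp hpa
    by_contra hcon
    push_neg at hcon
    obtain ⟨x₁, hx₁, hpx₁⟩ := hcon
    obtain ⟨x₀, hx₀, hmax⟩ := Set.exists_max_image X
      (fun x => (addOrderOf x).factorization p) hXfin ⟨x₁, hx₁⟩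
    set k := (addOrderOf x₀).factorization p with hk
    have hk1 : 1 ≤ k := by
      have h1 : 1 ≤ (addOrderOf x₁).factorization p :=
        (hp.factorization_pos_of_dvd (hordpos x₁).ne' hpx₁)
      exact le_trans h1 (hmax x₁ hx₁)
    -- b * x₀ = a * y for some y ∈ X
    obtain ⟨y, hy, hay⟩ := key 0 h0 x₀ hx₀
    rw [mul_zero, zero_add] at hay
    have hpb : ¬ p ∣ b := by
      intro hpb
      have h1 : p ∣ Nat.gcd a b := Nat.dvd_gcd hpa hpb
      rw [hab] at h1
      exact hp.one_lt.ne' (Nat.dvd_one.mp h1)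
    have hordb : addOrderOf ((b : ZMod g) * x₀) = addOrderOf x₀ / (addOrderOf x₀).gcd b := by
      rw [← nsmul_eq_mul]; exact addOrderOf_nsmul x₀ (n := b)
    have horda : addOrderOf ((a : ZMod g) * y) = addOrderOf y / (addOrderOf y).gcd a := by
      rw [← nsmul_eq_mul]; exact addOrderOf_nsmul y (n := a)
    have heqord : addOrderOf x₀ / (addOrderOf x₀).gcd b
        = addOrderOf y / (addOrderOf y).gcd a := by
      rw [← hordb, ← horda, hay]
    have hfb : ((addOrderOf x₀) / (addOrderOf x₀).gcd b).factorization p = k := by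
      rw [Nat.factorization_div (Nat.gcd_dvd_left _ _), Finsupp.coe_tsub, Pi.sub_apply,
        Nat.factorization_gcd (hordpos x₀).ne' hb.ne']
      simp [Nat.factorization_eq_zero_of_not_dvd hpb, ← hk]
    have hfa : ((addOrderOf y) / (addOrderOf y).gcd a).factorization p
        = (addOrderOf y).factorization p
          - min ((addOrderOf y).factorization p) (a.factorization p) := by
      rw [Nat.factorization_div (Nat.gcd_dvd_left _ _), Finsupp.coe_tsub, Pi.sub_apply,
        Nat.factorization_gcd (hordpos y).ne' ha.ne']
      simp [min_def]
    have hky : k = (addOrderOf y).factorization p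
        - min ((addOrderOf y).factorization p) (a.factorization p) := by
      rw [← hfa, ← heqord, hfb]
    have hfapos : 1 ≤ a.factorization p := hp.factorization_pos_of_dvd ha.ne' hpa
    have hylek : (addOrderOf y).factorization p ≤ k := hmax y hy
    omega

  -- the modulus m : coprime to a, kills all elements of X
  set c := Nat.gcd g (a ^ g) with hc
  have hcdvd : c ∣ g := Nat.gcd_dvd_left _ _
  set m := g / c with hm
  have hcpos : 0 < c := Nat.gcd_pos_of_pos_left _ hg
  have hmc : m * c = g := Nat.div_mul_cancel hcdvd
  have hmpos : 0 < m := Nat.div_pos (Nat.le_of_dvd hg hcdvd) hcpos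
  have hcprime : ∀ p : ℕ, p.Prime → p ∣ c → p ∣ a := by
    intro p hp hpc
    exact hp.dvd_of_dvd_pow (hpc.trans (Nat.gcd_dvd_right _ _))
  have hcoam : Nat.Coprime a m := by
    by_contra hcoam
    set p := Nat.minFac (Nat.gcd a m) with hp
    have hpp : p.Prime := Nat.minFac_prime hcoam
    have hpa : p ∣ a := (Nat.minFac_dvd _).trans (Nat.gcd_dvd_left _ _)
    have hpm : p ∣ m := (Nat.minFac_dvd _).trans (Nat.gcd_dvd_right _ _)
    have hfm : m.factorization p = g.factorization p - c.factorization p := by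
      rw [hm, Nat.factorization_div hcdvd, Finsupp.coe_tsub, Pi.sub_apply]
    have hfc : c.factorization p = min (g.factorization p) ((a ^ g).factorization p) := by
      rw [hc, Nat.factorization_gcd hg.ne' (pow_ne_zero _ ha.ne')]
      simp [min_def]
    have hfag : (a ^ g).factorization p = g * a.factorization p := by
      rw [Nat.factorization_pow]; simp
    have hfa1 : 1 ≤ a.factorization p := hpp.factorization_pos_of_dvd ha.ne' hpa
    have hfgle : g.factorization p ≤ g := by
      by_contra hlt
      push_neg at hlt
      have hdvd : p ^ g.factorization p ∣ g := Nat.ordProj_dvd g p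
      have : p ^ g.factorization p ≤ g := Nat.le_of_dvd hg hdvd
      have h2 : g < p ^ g.factorization p := by
        calc g < g.factorization p := hlt
        _ < 2 ^ g.factorization p := Nat.lt_two_pow_self
        _ ≤ p ^ g.factorization p := Nat.pow_le_pow_left hpp.two_le _
      omega
    have hfm1 : 1 ≤ m.factorization p := hpp.factorization_pos_of_dvd hmpos.ne' hpm
    have : min (g.factorization p) (g * a.factorization p) = g.factorization p := by
      apply min_eq_left
      calc g.factorization p ≤ g := hfgle
      _ = g * 1 := (mul_one g).symm
      _ ≤ g * a.factorization p := Nat.mul_le_mul_left g hfa1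
    omega
  have hkill : ∀ x ∈ X, (m : ZMod g) * x = 0 := by
    intro x hx
    have hog : addOrderOf x ∣ g := by
      have := ZMod.natCast_self g
      have h1 : (g : ℕ) • x = 0 := by
        rw [nsmul_eq_mul, ZMod.natCast_self, zero_mul]
      exact addOrderOf_dvd_of_nsmul_eq_zero h1
    have hcop : Nat.Coprime (addOrderOf x) c := by
      by_contra hco
      set p := Nat.minFac (Nat.gcd (addOrderOf x) c) with hp
      have hpp : p.Prime := Nat.minFac_prime hco
      have hpo : p ∣ addOrderOf x := (Nat.minFac_dvd _).trans (Nat.gcd_dvd_left _ _)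
      have hpc : p ∣ c := (Nat.minFac_dvd _).trans (Nat.gcd_dvd_right _ _)
      exact claimA p hpp (hcprime p hpp hpc) x hx hpo
    have hom : addOrderOf x ∣ m := by
      have h1 : addOrderOf x ∣ m * c := by rw [hmc]; exact hog
      exact (Nat.Coprime.dvd_of_dvd_mul_right hcop h1)
    have h2 : m • x = 0 := addOrderOf_dvd_iff_nsmul_eq_zero.mp hom
    rw [← nsmul_eq_mul]
    exact h2
    -- cancellation by a on m-torsion elements
  have hz1 : ∀ z : ZMod g, (m : ZMod g) * z = 0 →
      ((Nat.gcdA a m : ℤ) : ZMod g) * ((a : ZMod g) * z) = z := by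
    intro z hz
    have hg1 : Nat.gcd a m = 1 := hcoam
    have hbez : (1 : ℤ) = a * Nat.gcdA a m + m * Nat.gcdB a m := by
      have h := Nat.gcd_eq_gcd_ab a m
      rw [hg1] at h
      exact_mod_cast h
    have hcast : (1 : ZMod g) = (a : ZMod g) * ((Nat.gcdA a m : ℤ) : ZMod g)
        + (m : ZMod g) * ((Nat.gcdB a m : ℤ) : ZMod g) := by
      have h := congrArg (fun t : ℤ => ((t : ℤ) : ZMod g)) hbez
      push_cast at h
      exact h
    calc ((Nat.gcdA a m : ℤ) : ZMod g) * ((a : ZMod g) * z)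
        = ((a : ZMod g) * ((Nat.gcdA a m : ℤ) : ZMod g)
          + (m : ZMod g) * ((Nat.gcdB a m : ℤ) : ZMod g)) * z
          - ((Nat.gcdB a m : ℤ) : ZMod g) * ((m : ZMod g) * z) := by ring
      _ = z := by rw [← hcast, hz]; ring
  have inj : ∀ z z' : ZMod g, (m : ZMod g) * z = 0 → (m : ZMod g) * z' = 0 →
      (a : ZMod g) * z = (a : ZMod g) * z' → z = z' := by
    intro z z' hz hz' hzz
    rw [← hz1 z hz, ← hz1 z' hz', hzz]
  -- iteration of the sumset identity
  have iter : ∀ x ∈ X, ∀ t : ℕ, ∀ y ∈ X, ∃ z ∈ X,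
      (a : ZMod g) * z = (a : ZMod g) * y + (t : ZMod g) * ((b : ZMod g) * x) := by
    intro x hx t
    induction t with
    | zero => intro y hy; exact ⟨y, hy, by push_cast; ring⟩
    | succ n ih =>
      intro y hy
      obtain ⟨z, hz, hza⟩ := ih y hy
      obtain ⟨z', hz', hza'⟩ := key z hz x hx
      refine ⟨z', hz', ?_⟩
      rw [← hza', hza]
      push_cast
      ring
  intro x hx
  have hstep : ∀ y ∈ X, y + (b : ZMod g) * x ∈ X := by
    intro y hy
    obtain ⟨z, hz, hza⟩ := iter x hx a y hy
    have h1 : (a : ZMod g) * z = (a : ZMod g) * (y + (b : ZMod g) * x) := by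
      rw [hza]; ring
    have hk1 : (m : ZMod g) * z = 0 := hkill z hz
    have hk2 : (m : ZMod g) * (y + (b : ZMod g) * x) = 0 := by
      have hy0 := hkill y hy
      have hx0 := hkill x hx
      calc (m : ZMod g) * (y + (b : ZMod g) * x)
          = (m : ZMod g) * y + (b : ZMod g) * ((m : ZMod g) * x) := by ring
        _ = 0 := by rw [hy0, hx0]; ring
    have hzeq := inj z (y + (b : ZMod g) * x) hk1 hk2 h1
    rwa [← hzeq]
  have himg : (fun w => w + (b : ZMod g) * x) '' X = X := by
    apply Set.eq_of_subset_of_ncard_le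
    · rintro w ⟨y, hy, rfl⟩; exact hstep y hy
    · rw [Set.ncard_image_of_injective X (add_left_injective _)]
    · exact hXfin
  have hbx0 : (b : ZMod g) * x = 0 := hnp _ himg
  -- conclude x is a multiple of g / gcd g b
  have hxv : ((x.val : ℕ) : ZMod g) = x := ZMod.natCast_rightInverse x
  have hdvd : g ∣ b * x.val := by
    have h : ((b * x.val : ℕ) : ZMod g) = 0 := by push_cast; rw [hxv, hbx0]
    exact (ZMod.natCast_eq_zero_iff _ g).mp h
  set d := Nat.gcd g b with hd
  have hdpos : 0 < d := Nat.gcd_pos_of_pos_left _ hg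
  have hgd : g / d * d = g := Nat.div_mul_cancel (Nat.gcd_dvd_left _ _)
  have hbd : b / d * d = b := Nat.div_mul_cancel (Nat.gcd_dvd_right _ _)
  have h1 : (g / d) * d ∣ ((b / d) * x.val) * d := by
    rw [hgd, mul_right_comm, hbd]
    exact hdvd
  have h2 : (g / d) ∣ (b / d) * x.val := (Nat.mul_dvd_mul_iff_right hdpos).mp h1
  have hcop2 : Nat.Coprime (g / d) (b / d) := Nat.coprime_div_gcd_div_gcd hdpos
  have h3 : (g / d) ∣ x.val := hcop2.dvd_of_dvd_mul_left h2
  obtain ⟨w, hw⟩ := h3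
  refine ⟨(w : ZMod g), ?_⟩
  rw [← hxv, hw]
  push_cast
  ring
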